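/- (Maximizing the worst-case growth rate, Corollary 4.4.) Let T ≥ 2, ε ∈ (0,1), μ ∈ ℝ^N, Σ a symmetric positive definite N×N real matrix, and let ρ̄ ∈ (−1/(T−1), 1). Define c₁ = sqrt( ((1−ε)(1 + (T−1)ρ̄)) / (εT) ), c₂ = sqrt( ((T−1)(1−ρ̄)) / (εT) ), G(w) = (1/2)·( 1 − (1 − wᵀμ + c₁·sqrt(wᵀΣw))² − c₂²·wᵀΣw ), and f(w) = ‖( 1 − wᵀμ + c₁·sqrt(wᵀΣw), c₂·sqrt(wᵀΣw) )‖ (Euclidean norm in ℝ²). Let W ⊆ ℝ^N be a convex set such that 1 − wᵀμ > sqrt( ((1 + (T−1)ρ̄)·ε) / ((1−ε)·T) ) · sqrt(wᵀΣw) for every w ∈ W. Then: (a) G(w) = (1/2)·(1 − f(w)²) and f(w) > 0 for every w ∈ W, so a point w* ∈ W maximizes G over W if and only if w* minimizes f over W; and (b) f is a convex function on W. -/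

import Mathlib

open Matrix

noncomputable section

/-- `c₁ = √((1-ε)(1+(T-1)ρ̄)/(εT))`. -/
def c1 (T : ℕ) (ε ρbar : ℝ) : ℝ :=
  Real.sqrt ((1 - ε) * (1 + ((T : ℝ) - 1) * ρbar) / (ε * T))

/-- `c₂ = √((T-1)(1-ρ̄)/(εT))`. -/
def c2 (T : ℕ) (ε ρbar : ℝ) : ℝ :=
  Real.sqrt (((T : ℝ) - 1) * (1 - ρbar) / (ε * T))

/-- The closed-form worst-case growth rate
`G(w) = (1/2)(1 - (1 - wᵀμ + c₁√(wᵀΣw))² - c₂²·wᵀΣw)`. -/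
def G (T N : ℕ) (ε ρbar : ℝ) (μ : Fin N → ℝ) (S : Matrix (Fin N) (Fin N) ℝ)
    (w : Fin N → ℝ) : ℝ :=
  (1 / 2) * (1 - (1 - w ⬝ᵥ μ + c1 T ε ρbar * Real.sqrt (w ⬝ᵥ S.mulVec w)) ^ 2 -
    (c2 T ε ρbar) ^ 2 * (w ⬝ᵥ S.mulVec w))

/-- `f(w) = ‖(1 - wᵀμ + c₁√(wᵀΣw), c₂√(wᵀΣw))‖`, Euclidean norm in `ℝ²`. -/
def f (T N : ℕ) (ε ρbar : ℝ) (μ : Fin N → ℝ) (S : Matrix (Fin N) (Fin N) ℝ)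
    (w : Fin N → ℝ) : ℝ :=
  ‖((WithLp.equiv 2 (Fin 2 → ℝ)).symm
      ![1 - w ⬝ᵥ μ + c1 T ε ρbar * Real.sqrt (w ⬝ᵥ S.mulVec w),
        c2 T ε ρbar * Real.sqrt (w ⬝ᵥ S.mulVec w)] : EuclideanSpace ℝ (Fin 2))‖

/-- Subadditivity of `w ↦ √(wᵀΣw)` for positive definite `Σ`. -/
lemma sqrt_quad_subadd {N : ℕ} {S : Matrix (Fin N) (Fin N) ℝ} (hSpd : S.PosDef)
    (x y : Fin N → ℝ) :
    Real.sqrt ((x + y) ⬝ᵥ S.mulVec (x + y)) ≤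
      Real.sqrt (x ⬝ᵥ S.mulVec x) + Real.sqrt (y ⬝ᵥ S.mulVec y) := by
  letI inst : NormedAddCommGroup (Fin N → ℝ) := Matrix.toNormedAddCommGroup S hSpd
  letI i1 : SeminormedAddCommGroup (Fin N → ℝ) :=
    @NormedAddCommGroup.toSeminormedAddCommGroup _ inst
  letI i2 : SeminormedAddGroup (Fin N → ℝ) :=
    @SeminormedAddCommGroup.toSeminormedAddGroup _ i1
  have h := @norm_add_le _ i2 x y
  simp only [dotProduct_comm _ (S *ᵥ _)]
  exact h

/-- Absolute homogeneity of `w ↦ √(wᵀΣw)`. -/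
lemma sqrt_quad_smul {N : ℕ} {S : Matrix (Fin N) (Fin N) ℝ}
    (s : ℝ) (x : Fin N → ℝ) :
    Real.sqrt ((s • x) ⬝ᵥ S.mulVec (s • x)) = |s| * Real.sqrt (x ⬝ᵥ S.mulVec x) := by
  have h : (s • x) ⬝ᵥ S.mulVec (s • x) = s ^ 2 * (x ⬝ᵥ S.mulVec x) := by
    simp [smul_dotProduct, Matrix.mulVec_smul, smul_eq_mul, dotProduct_smul]
    ring
  rw [h, Real.sqrt_mul (sq_nonneg s), Real.sqrt_sq_eq_abs]

lemma quad_nonneg {N : ℕ} {S : Matrix (Fin N) (Fin N) ℝ} (hSpd : S.PosDef)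
    (v : Fin N → ℝ) : 0 ≤ v ⬝ᵥ S.mulVec v := by
  simpa using hSpd.posSemidef.re_dotProduct_nonneg v

/-- Minkowski inequality in the plane. -/
lemma sqrt_mink (p q r s : ℝ) :
    Real.sqrt ((p + r) ^ 2 + (q + s) ^ 2) ≤
      Real.sqrt (p ^ 2 + q ^ 2) + Real.sqrt (r ^ 2 + s ^ 2) := by
  have habs : ∀ u v : ℝ, ‖(⟨u, v⟩ : ℂ)‖ = Real.sqrt (u ^ 2 + v ^ 2) := by
    intro u v
    rw [Complex.norm_def, Complex.normSq_mk]
    ring_nf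
  have h := norm_add_le (⟨p, q⟩ : ℂ) ⟨r, s⟩
  rw [show (⟨p, q⟩ + ⟨r, s⟩ : ℂ) = ⟨p + r, q + s⟩ by apply Complex.ext <;> simp] at h
  simpa [habs] using h

/-- `f` as an explicit square root. -/
lemma f_eq (T N : ℕ) (ε ρbar : ℝ) (μ : Fin N → ℝ) (S : Matrix (Fin N) (Fin N) ℝ)
    (w : Fin N → ℝ) :
    f T N ε ρbar μ S w =
      Real.sqrt ((1 - w ⬝ᵥ μ + c1 T ε ρbar * Real.sqrt (w ⬝ᵥ S.mulVec w)) ^ 2 +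
        (c2 T ε ρbar * Real.sqrt (w ⬝ᵥ S.mulVec w)) ^ 2) := by
  rw [f, EuclideanSpace.norm_eq]
  simp [Fin.sum_univ_two, Real.norm_eq_abs, sq_abs]

/-- Maximizing the worst-case growth rate (Corollary 4.4): on a convex set `W` of
portfolios satisfying the feasibility condition, (a) `G(w) = (1/2)(1 - f(w)²)` with
`f(w) > 0`, so `w*` maximizes `G` over `W` iff it minimizes `f` over `W`; and
(b) `f` is convex on `W`. -/
theorem maximizing_worst_case_growth_rate (T N : ℕ) (hT : 2 ≤ T) (ε : ℝ)
    (hε : ε ∈ Set.Ioo (0 : ℝ) 1) (μ : Fin N → ℝ) (S : Matrix (Fin N) (Fin N) ℝ)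
    (hS : S.IsSymm) (hSpd : S.PosDef) (ρbar : ℝ)
    (hρbar : ρbar ∈ Set.Ioo (-1 / ((T : ℝ) - 1)) 1)
    (W : Set (Fin N → ℝ)) (hW : Convex ℝ W)
    (hfeas : ∀ w ∈ W,
      Real.sqrt ((1 + ((T : ℝ) - 1) * ρbar) * ε / ((1 - ε) * T)) *
        Real.sqrt (w ⬝ᵥ S.mulVec w) < 1 - w ⬝ᵥ μ) :
    ((∀ w ∈ W, G T N ε ρbar μ S w = (1 / 2) * (1 - (f T N ε ρbar μ S w) ^ 2) ∧
        0 < f T N ε ρbar μ S w) ∧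
      (∀ wstar ∈ W,
        ((∀ w ∈ W, G T N ε ρbar μ S w ≤ G T N ε ρbar μ S wstar) ↔
          (∀ w ∈ W, f T N ε ρbar μ S wstar ≤ f T N ε ρbar μ S w)))) ∧
    ConvexOn ℝ W (f T N ε ρbar μ S) := by
  set g : (Fin N → ℝ) → ℝ := fun w => Real.sqrt (w ⬝ᵥ S.mulVec w) with hg
  have hg0 : ∀ w, 0 ≤ g w := fun w => Real.sqrt_nonneg _
  have hc1 : 0 ≤ c1 T ε ρbar := Real.sqrt_nonneg _
  have hc2 : 0 ≤ c2 T ε ρbar := Real.sqrt_nonneg _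
  set a : (Fin N → ℝ) → ℝ := fun w => 1 - w ⬝ᵥ μ + c1 T ε ρbar * g w with ha
  set b : (Fin N → ℝ) → ℝ := fun w => c2 T ε ρbar * g w with hb
  have hb0 : ∀ w, 0 ≤ b w := fun w => mul_nonneg hc2 (hg0 w)
  have hfeq : ∀ w, f T N ε ρbar μ S w = Real.sqrt (a w ^ 2 + b w ^ 2) :=
    fun w => f_eq T N ε ρbar μ S w
  have haW : ∀ w ∈ W, 0 < a w := by
    intro w hw
    have h1 := hfeas w hw
    have h2 : 0 ≤ Real.sqrt ((1 + ((T : ℝ) - 1) * ρbar) * ε / ((1 - ε) * T)) *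
        Real.sqrt (w ⬝ᵥ S.mulVec w) :=
      mul_nonneg (Real.sqrt_nonneg _) (Real.sqrt_nonneg _)
    have h3 : 0 ≤ c1 T ε ρbar * g w := mul_nonneg hc1 (hg0 w)
    simp only [ha]
    linarith
  have hfsq : ∀ w, (f T N ε ρbar μ S w) ^ 2 = a w ^ 2 + b w ^ 2 := by
    intro w
    rw [hfeq w, Real.sq_sqrt (by positivity)]
  have hfnn : ∀ w, 0 ≤ f T N ε ρbar μ S w := by
    intro w; rw [hfeq w]; exact Real.sqrt_nonneg _
  have hGeq : ∀ w, G T N ε ρbar μ S w = (1 / 2) * (1 - (f T N ε ρbar μ S w) ^ 2) := by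
    intro w
    have hq : 0 ≤ w ⬝ᵥ S.mulVec w := quad_nonneg hSpd w
    have hgsq : g w ^ 2 = w ⬝ᵥ S.mulVec w := Real.sq_sqrt hq
    rw [hfsq w, G]
    simp only [ha, hb]
    rw [mul_pow, hgsq]
    ring
  have hfpos : ∀ w ∈ W, 0 < f T N ε ρbar μ S w := by
    intro w hw
    have h1 := haW w hw
    have := hfsq w
    nlinarith [hfnn w, hb0 w]
  refine ⟨⟨fun w hw => ⟨hGeq w, hfpos w hw⟩, ?_⟩, ?_⟩
  · intro wstar hws
    constructor
    · intro hmax w hw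
      have h := hmax w hw
      rw [hGeq w, hGeq wstar] at h
      nlinarith [hfpos w hw, hfpos wstar hws]
    · intro hmin w hw
      have h := hmin w hw
      rw [hGeq w, hGeq wstar]
      nlinarith [hfpos w hw, hfpos wstar hws]
  · refine ⟨hW, ?_⟩
    intro x hx y hy s t hs ht hst
    have hz : s • x + t • y ∈ W := hW hx hy hs ht hst
    set z := s • x + t • y with hzdef
    -- subadditivity of g at the convex combination
    have hgz : g z ≤ s * g x + t * g y := by
      have h1 : g z ≤ g (s • x) + g (t • y) := sqrt_quad_subadd hSpd (s • x) (t • y)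
      have h2 : g (s • x) = s * g x := by
        simp only [hg]; rw [sqrt_quad_smul, abs_of_nonneg hs]
      have h3 : g (t • y) = t * g y := by
        simp only [hg]; rw [sqrt_quad_smul, abs_of_nonneg ht]
      linarith
    have hdot : z ⬝ᵥ μ = s * (x ⬝ᵥ μ) + t * (y ⬝ᵥ μ) := by
      simp [hzdef, add_dotProduct, smul_dotProduct, smul_eq_mul]
    have haz : a z ≤ s * a x + t * a y := by
      simp only [ha]
      have := mul_le_mul_of_nonneg_left hgz hc1
      rw [hdot]
      nlinarith
    have hbz : b z ≤ s * b x + t * b y := by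
      simp only [hb]
      have := mul_le_mul_of_nonneg_left hgz hc2
      nlinarith
    have haz0 : 0 ≤ a z := le_of_lt (haW z hz)
    have hbz0 : 0 ≤ b z := hb0 z
    have hax0 : 0 ≤ s * a x := mul_nonneg hs (le_of_lt (haW x hx))
    have hay0 : 0 ≤ t * a y := mul_nonneg ht (le_of_lt (haW y hy))
    have hbx0 : 0 ≤ s * b x := mul_nonneg hs (hb0 x)
    have hby0 : 0 ≤ t * b y := mul_nonneg ht (hb0 y)
    calc f T N ε ρbar μ S z
        = Real.sqrt (a z ^ 2 + b z ^ 2) := hfeq z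
      _ ≤ Real.sqrt ((s * a x + t * a y) ^ 2 + (s * b x + t * b y) ^ 2) := by
          apply Real.sqrt_le_sqrt
          apply add_le_add
          · exact pow_le_pow_left₀ haz0 haz 2
          · exact pow_le_pow_left₀ hbz0 hbz 2
      _ ≤ Real.sqrt ((s * a x) ^ 2 + (s * b x) ^ 2) +
            Real.sqrt ((t * a y) ^ 2 + (t * b y) ^ 2) :=
          sqrt_mink (s * a x) (s * b x) (t * a y) (t * b y)
      _ = s * Real.sqrt (a x ^ 2 + b x ^ 2) + t * Real.sqrt (a y ^ 2 + b y ^ 2) := by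
          rw [show (s * a x) ^ 2 + (s * b x) ^ 2 = s ^ 2 * (a x ^ 2 + b x ^ 2) by ring,
            show (t * a y) ^ 2 + (t * b y) ^ 2 = t ^ 2 * (a y ^ 2 + b y ^ 2) by ring,
            Real.sqrt_mul (sq_nonneg s), Real.sqrt_mul (sq_nonneg t),
            Real.sqrt_sq hs, Real.sqrt_sq ht]
      _ = s * f T N ε ρbar μ S x + t * f T N ε ρbar μ S y := by
          rw [hfeq x, hfeq y]
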